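/- Let c_E be the sharp sub-exponential comparison constant and L a standard Laplace random variable (density (1/2)e^{-|x|}). For every c with 0 < c < c_E there exists an integrable mean-zero random variable X⋆ with P(|X⋆| > t) ≤ min{1, 2e^{-t}} for all t ≥ 0 such that, with f(x) = max(x − c·w_E, 0), one has E[f(X⋆)] > E[f(c·L)]; in particular X⋆ is not dominated by c·L in the convex order. -/

import Mathlib

open MeasureTheory Real Set

/-- The standard Laplace law on `ℝ`, with density `(1/2)e^{-|x|}` w.r.t. Lebesgue measure. -/
noncomputable def laplaceMeasure : Measure ℝ :=
  (volume : Measure ℝ).withDensity fun x => ENNReal.ofReal ((1 / 2) * Real.exp (-|x|))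

/-- The sub-exponential tail envelope `s_E(t) = min{1, 2e^{-t}}`. -/
noncomputable def sE (t : ℝ) : ℝ := min 1 (2 * Real.exp (-t))

/-- `A_E = ∫₀^∞ s_E(t) dt`. -/
noncomputable def AE : ℝ := ∫ t in Set.Ioi (0 : ℝ), sE t

/-- `H_E(x) = x s_E(x) + ∫_x^∞ s_E(t) dt`. -/
noncomputable def HE (x : ℝ) : ℝ := x * sE x + ∫ t in Set.Ioi x, sE t

open Filter NNReal ENNReal

lemma myIntOn_exp_neg (a : ℝ) : IntegrableOn (fun x => Real.exp (-x)) (Set.Ioi a) := by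
  simpa using exp_neg_integrableOn_Ioi a one_pos

lemma myInt_exp_neg (a : ℝ) : ∫ x in Set.Ioi a, Real.exp (-x) = Real.exp (-a) :=
  integral_exp_neg_Ioi a

lemma myDeriv (x : ℝ) : HasDerivAt (fun x : ℝ => -(x + 1) * Real.exp (-x))
    (x * Real.exp (-x)) x := by
  have h1 : HasDerivAt (fun x : ℝ => -(x + 1)) (-1) x := by
    exact ((hasDerivAt_id' x).add_const 1).neg
  have h2 : HasDerivAt (fun x : ℝ => Real.exp (-x)) (-Real.exp (-x)) x := by
    have := (hasDerivAt_neg x).exp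
    convert this using 1
    ring
  have := h1.mul h2
  exact this.congr_deriv (by ring)

lemma myTendsto : Tendsto (fun x : ℝ => -(x + 1) * Real.exp (-x)) atTop (nhds 0) := by
  have h1 := tendsto_pow_mul_exp_neg_atTop_nhds_zero 1
  have h0 := tendsto_pow_mul_exp_neg_atTop_nhds_zero 0
  have : Tendsto (fun x : ℝ => -(x ^ 1 * Real.exp (-x)) - x ^ 0 * Real.exp (-x)) atTop
      (nhds (-(0:ℝ) - 0)) := (h1.neg).sub h0
  simp only [neg_zero, sub_zero] at this
  refine this.congr' ?_
  filter_upwards [eventually_ge_atTop (0:ℝ)] with x _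
  ring

lemma myIntOn_id_exp_neg {a : ℝ} (ha : 0 ≤ a) :
    IntegrableOn (fun x => x * Real.exp (-x)) (Set.Ioi a) := by
  refine integrableOn_Ioi_deriv_of_nonneg' (fun x _ => myDeriv x) (fun x hx => ?_) myTendsto
  exact mul_nonneg (ha.trans (le_of_lt hx)) (Real.exp_pos _).le

lemma myInt_id_exp_neg {a : ℝ} (ha : 0 ≤ a) :
    ∫ x in Set.Ioi a, x * Real.exp (-x) = (a + 1) * Real.exp (-a) := by
  have := integral_Ioi_of_hasDerivAt_of_nonneg' (fun x _ => myDeriv x)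
    (fun x hx => mul_nonneg (ha.trans (le_of_lt hx)) (Real.exp_pos _).le) myTendsto
  rw [this]; ring

lemma myIntOn_exp_Ioo (a b : ℝ) : IntegrableOn (fun x => Real.exp x) (Set.Ioo a b) :=
  Real.continuous_exp.integrableOn_Icc.mono_set Set.Ioo_subset_Icc_self

lemma myIntOn_id_exp_Ioo (a b : ℝ) : IntegrableOn (fun x => x * Real.exp x) (Set.Ioo a b) :=
  (continuous_id.mul Real.continuous_exp).integrableOn_Icc.mono_set Set.Ioo_subset_Icc_self

lemma myInt_exp_Ioo {a b : ℝ} (h : a ≤ b) :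
    ∫ x in Set.Ioo a b, Real.exp x = Real.exp b - Real.exp a := by
  rw [← MeasureTheory.integral_Ioc_eq_integral_Ioo, ← intervalIntegral.integral_of_le h,
    integral_exp]

lemma myInt_id_exp_Ioo {a b : ℝ} (h : a ≤ b) :
    ∫ x in Set.Ioo a b, x * Real.exp x = (b - 1) * Real.exp b - (a - 1) * Real.exp a := by
  rw [← MeasureTheory.integral_Ioc_eq_integral_Ioo, ← intervalIntegral.integral_of_le h]
  have : ∀ x ∈ Set.uIcc a b, HasDerivAt (fun x : ℝ => (x - 1) * Real.exp x)
      (x * Real.exp x) x := by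
    intro x _
    have := ((hasDerivAt_id x).sub_const 1).mul (Real.hasDerivAt_exp x)
    simp only [id] at this
    exact this.congr_deriv (by ring)
  rw [intervalIntegral.integral_eq_sub_of_hasDerivAt this
    ((continuous_id.mul Real.continuous_exp).intervalIntegrable a b)]

lemma sE_continuous : Continuous sE :=
  continuous_const.min (continuous_const.mul (Real.continuous_exp.comp continuous_neg))

lemma sE_nonneg (t : ℝ) : 0 ≤ sE t :=
  le_min zero_le_one (by positivity)

lemma sE_of_ge {t : ℝ} (h : Real.log 2 ≤ t) : sE t = 2 * Real.exp (-t) := by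
  apply min_eq_right
  have h2 : Real.exp (-t) ≤ Real.exp (-Real.log 2) := Real.exp_le_exp.mpr (by linarith)
  have h3 : Real.exp (-Real.log 2) = 1/2 := by
    rw [Real.exp_neg, Real.exp_log two_pos]; norm_num
  rw [h3] at h2
  linarith

lemma sE_of_le {t : ℝ} (h : t ≤ Real.log 2) : sE t = 1 := by
  apply min_eq_left
  have h2 : Real.exp (-Real.log 2) ≤ Real.exp (-t) := Real.exp_le_exp.mpr (by linarith)
  have h3 : Real.exp (-Real.log 2) = 1/2 := by
    rw [Real.exp_neg, Real.exp_log two_pos]; norm_num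
  rw [h3] at h2
  linarith

lemma myIntOn_sE (x : ℝ) : IntegrableOn sE (Set.Ioi x) := by
  refine Integrable.mono ((myIntOn_exp_neg x).const_mul 2)
    (sE_continuous.aestronglyMeasurable.restrict) ?_
  filter_upwards with t
  rw [Real.norm_eq_abs, Real.norm_eq_abs, abs_of_nonneg (sE_nonneg t),
    abs_of_nonneg (by positivity)]
  exact min_le_right _ _

lemma myInt_sE_ge {x : ℝ} (h : Real.log 2 ≤ x) :
    ∫ t in Set.Ioi x, sE t = 2 * Real.exp (-x) := by
  rw [setIntegral_congr_fun measurableSet_Ioi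
    (fun t (ht : x < t) => sE_of_ge (h.trans ht.le)), MeasureTheory.integral_const_mul, myInt_exp_neg]

lemma myInt_sE_le {x : ℝ} (h : x ≤ Real.log 2) :
    ∫ t in Set.Ioi x, sE t = (Real.log 2 - x) + 1 := by
  rw [← Set.Ioc_union_Ioi_eq_Ioi h,
    setIntegral_union (Set.Ioc_disjoint_Ioi le_rfl) measurableSet_Ioi
      (sE_continuous.integrableOn_Ioc) ((myIntOn_sE _))]
  have h1 : ∫ t in Set.Ioc x (Real.log 2), sE t = Real.log 2 - x := by
    rw [setIntegral_congr_fun measurableSet_Ioc (fun t ht => sE_of_le ht.2),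
      setIntegral_const, smul_eq_mul, mul_one, Real.volume_real_Ioc_of_le h]
  have h2 : ∫ t in Set.Ioi (Real.log 2), sE t = 1 := by
    have h3 : Real.exp (-Real.log 2) = 1/2 := by
      rw [Real.exp_neg, Real.exp_log two_pos]; norm_num
    rw [myInt_sE_ge le_rfl, h3]
    norm_num
  rw [h1, h2]

lemma myAE : AE = Real.log 2 + 1 := by
  have := myInt_sE_le (Real.log_nonneg one_le_two)
  rw [AE, this]; ring

set_option maxHeartbeats 1000000 in
/-- Sharpness of the sub-exponential comparison constant: for every `0 < c < c_E` there is
an integrable mean-zero random variable `X⋆` (given here by its law `ν` on `ℝ`) with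
`P(|X⋆| > t) ≤ min{1, 2e^{-t}}` for all `t ≥ 0` such that, for the convex function
`f(x) = max(x − c w_E, 0)`, one has `E[f(X⋆)] > E[f(cL)]`, with `L` standard Laplace; in
particular `X⋆` is not dominated by `cL` in the convex order. -/
theorem stmt14
    (aE pE wE cE : ℝ)
    (haE : 0 < aE) (hHaE : HE aE = AE / 2)
    (hpE : pE = 2 * Real.exp (-aE))
    (hwE : wE = Real.log (1 / (2 * pE)))
    (hcE : cE = (AE / 2) / (pE * (1 + wE)))
    (c : ℝ) (hc_pos : 0 < c) (hc_lt : c < cE) :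
    ∃ ν : Measure ℝ, IsProbabilityMeasure ν ∧
      Integrable (fun x => x) ν ∧
      (∫ x, x ∂ν) = 0 ∧
      (∀ t : ℝ, 0 ≤ t → ν {x | t < |x|} ≤ ENNReal.ofReal (sE t)) ∧
      (∫ x, max (c * x - c * wE) 0 ∂laplaceMeasure) < ∫ x, max (x - c * wE) 0 ∂ν := by
  have hl2 : 0 < Real.log 2 := Real.log_pos one_lt_two
  have hexp_l2 : Real.exp (-Real.log 2) = 1/2 := by
    rw [Real.exp_neg, Real.exp_log two_pos]; norm_num
  have hAE : AE = Real.log 2 + 1 := myAE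
  have hAE_pos : 0 < AE := by rw [hAE]; linarith
  have hpE_pos : 0 < pE := by rw [hpE]; positivity
  have haE2 : Real.log 2 < aE := by
    by_contra h
    push_neg at h
    have h1 : HE aE = AE := by
      rw [HE, sE_of_le h, myInt_sE_le h, hAE]; ring
    rw [h1] at hHaE
    linarith
  have key : pE * (1 + aE) = AE / 2 := by
    rw [← hHaE, HE, sE_of_ge haE2.le, myInt_sE_ge haE2.le, hpE]; ring
  have hkey' : pE * (1 + aE) = (Real.log 2 + 1) / 2 := by rw [key, hAE]
  have h1aE : (0:ℝ) < 1 + aE := by linarith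
  have hpE_half : pE < 1/2 := by nlinarith
  have h2pE : (0:ℝ) < 2 * pE := by linarith
  have hwE_pos : 0 < wE := by
    rw [hwE]
    exact Real.log_pos ((one_lt_div h2pE).mpr (by linarith))
  have hexp_wE : Real.exp (-wE) = 2 * pE := by
    rw [hwE, one_div, Real.log_inv, neg_neg, Real.exp_log h2pE]
  have hexp_aE : Real.exp (-aE) = pE / 2 := by rw [hpE]; ring
  have hwE_lt_aE : wE < aE := by
    have h1 : Real.exp (-aE) < Real.exp (-wE) := by
      rw [hexp_wE, hexp_aE]; linarith
    have := Real.exp_lt_exp.mp h1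
    linarith
  have h1wE : (0:ℝ) < 1 + wE := by linarith
  have hcE' : cE * (1 + wE) = 1 + aE := by
    rw [hcE, ← key]
    field_simp
  have hcE_ge1 : 1 ≤ cE := by nlinarith
  have hcwE_lt : c * wE < aE := by nlinarith
  have hc_lin : c * (1 + wE) < 1 + aE := by nlinarith
  have hcwE_nonneg : 0 ≤ c * wE := by positivity
  -- the extremal measure
  set dens : ℝ → ℝ := fun x => (Set.Ioi aE).indicator (fun y => 2 * Real.exp (-y)) x
      + (Set.Ioo (-aE) (-Real.log 2)).indicator (fun y => 2 * Real.exp y) x with hdens_def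
  have hSp : MeasurableSet (Set.Ioi aE) := measurableSet_Ioi
  have hSm : MeasurableSet (Set.Ioo (-aE) (-Real.log 2)) := measurableSet_Ioo
  have hdens_meas : Measurable dens := by
    apply Measurable.add
    · exact ((continuous_const.mul (Real.continuous_exp.comp continuous_neg)).measurable).indicator hSp
    · exact ((continuous_const.mul Real.continuous_exp).measurable).indicator hSm
  have hdens_nonneg : ∀ x, 0 ≤ dens x := fun x =>
    add_nonneg (Set.indicator_nonneg (fun y _ => by positivity) x)
      (Set.indicator_nonneg (fun y _ => by positivity) x)
  set ν : Measure ℝ := volume.withDensity fun x => ENNReal.ofReal (dens x) with hν_def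
  have htoNN : Measurable fun x => Real.toNNReal (dens x) := hdens_meas.real_toNNReal
  have hν_eq : ν = volume.withDensity fun x => ((Real.toNNReal (dens x) : ℝ≥0) : ℝ≥0∞) := rfl
  have hIoo_le : -aE ≤ -Real.log 2 := by linarith
  -- integrability of the density
  have hIp0 : IntegrableOn (fun y => 2 * Real.exp (-y)) (Set.Ioi aE) volume :=
    (myIntOn_exp_neg aE).const_mul 2
  have hIm0 : IntegrableOn (fun y => 2 * Real.exp y) (Set.Ioo (-aE) (-Real.log 2)) volume :=
    (continuous_const.mul Real.continuous_exp).integrableOn_Icc.mono_set Set.Ioo_subset_Icc_self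
  have hdens_int : Integrable dens volume :=
    ((integrable_indicator_iff hSp).mpr hIp0).add ((integrable_indicator_iff hSm).mpr hIm0)
  -- the master computation lemma
  have main : ∀ h : ℝ → ℝ,
      IntegrableOn (fun x => 2 * Real.exp (-x) * h x) (Set.Ioi aE) volume →
      IntegrableOn (fun x => 2 * Real.exp x * h x) (Set.Ioo (-aE) (-Real.log 2)) volume →
      Integrable h ν ∧ (∫ x, h x ∂ν)
        = (∫ x in Set.Ioi aE, 2 * Real.exp (-x) * h x)
          + ∫ x in Set.Ioo (-aE) (-Real.log 2), 2 * Real.exp x * h x := by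
    intro h hIp hIm
    have e1 : ∀ x, (Real.toNNReal (dens x) : ℝ≥0) • h x
        = (Set.Ioi aE).indicator (fun y => 2 * Real.exp (-y) * h y) x
          + (Set.Ioo (-aE) (-Real.log 2)).indicator (fun y => 2 * Real.exp y * h y) x := by
      intro x
      rw [NNReal.smul_def, Real.coe_toNNReal _ (hdens_nonneg x), hdens_def]
      simp only [Set.indicator_mul_left, smul_eq_mul]
      ring
    have hIsum : Integrable (fun x => (Real.toNNReal (dens x) : ℝ≥0) • h x) volume := by
      rw [funext e1]
      exact ((integrable_indicator_iff hSp).mpr hIp).add ((integrable_indicator_iff hSm).mpr hIm)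
    constructor
    · rw [hν_eq]
      exact (integrable_withDensity_iff_integrable_smul htoNN).mpr hIsum
    · rw [hν_eq, integral_withDensity_eq_integral_smul htoNN]
      rw [funext e1, integral_add ((integrable_indicator_iff hSp).mpr hIp)
        ((integrable_indicator_iff hSm).mpr hIm),
        integral_indicator hSp, integral_indicator hSm]
  -- total mass
  have hdens_val : ∫ x, dens x = 1 := by
    rw [hdens_def, integral_add ((integrable_indicator_iff hSp).mpr hIp0)
      ((integrable_indicator_iff hSm).mpr hIm0),
      integral_indicator hSp, integral_indicator hSm,
      MeasureTheory.integral_const_mul, MeasureTheory.integral_const_mul,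
      myInt_exp_neg, myInt_exp_Ioo hIoo_le, hexp_aE, hexp_l2]
    ring
  have hprob : IsProbabilityMeasure ν := by
    constructor
    rw [hν_def, withDensity_apply _ MeasurableSet.univ, Measure.restrict_univ,
      ← ofReal_integral_eq_lintegral_ofReal hdens_int
        (Filter.Eventually.of_forall hdens_nonneg),
      hdens_val, ENNReal.ofReal_one]
  -- tail bound
  have htail : ∀ t : ℝ, 0 ≤ t → ν {x | t < |x|} ≤ ENNReal.ofReal (sE t) := by
    intro t ht
    have hAset : {x : ℝ | t < |x|} = Set.Ioi t ∪ Set.Iio (-t) := by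
      ext x
      rw [Set.mem_setOf_eq, lt_abs, Set.mem_union, Set.mem_Ioi, Set.mem_Iio, lt_neg]
    have hAm : MeasurableSet {x : ℝ | t < |x|} := by
      rw [hAset]; exact measurableSet_Ioi.union measurableSet_Iio
    rcases le_or_gt t (Real.log 2) with hcase | hcase
    · calc ν {x | t < |x|} ≤ ν Set.univ := measure_mono (Set.subset_univ _)
        _ = 1 := hprob.measure_univ
        _ = ENNReal.ofReal (sE t) := by rw [sE_of_le hcase, ENNReal.ofReal_one]
    · have hνA : ν {x | t < |x|} = ENNReal.ofReal (∫ x in {x : ℝ | t < |x|}, dens x) := by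
        rw [hν_def, withDensity_apply _ hAm,
          ← ofReal_integral_eq_lintegral_ofReal hdens_int.integrableOn
            (Filter.Eventually.of_forall hdens_nonneg)]
      have ep : {x : ℝ | t < |x|} ∩ Set.Ioi aE = Set.Ioi (max t aE) := by
        rw [hAset]
        ext x
        simp only [Set.mem_inter_iff, Set.mem_union, Set.mem_Ioi, Set.mem_Iio, max_lt_iff]
        constructor
        · rintro ⟨h1 | h1, h2⟩
          · exact ⟨h1, h2⟩
          · exfalso; linarith
        · rintro ⟨h1, h2⟩; exact ⟨Or.inl h1, h2⟩
      have em : {x : ℝ | t < |x|} ∩ Set.Ioo (-aE) (-Real.log 2) = Set.Ioo (-aE) (-t) := by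
        rw [hAset]
        ext x
        simp only [Set.mem_inter_iff, Set.mem_union, Set.mem_Ioi, Set.mem_Iio, Set.mem_Ioo]
        constructor
        · rintro ⟨h1 | h1, h2, h3⟩
          · exfalso; linarith
          · exact ⟨h2, h1⟩
        · rintro ⟨h1, h2⟩; exact ⟨Or.inr h2, h1, by linarith⟩
      have hval : ∫ x in {x : ℝ | t < |x|}, dens x = 2 * Real.exp (-t) := by
        rw [hdens_def, integral_add (((integrable_indicator_iff hSp).mpr hIp0).integrableOn)
          (((integrable_indicator_iff hSm).mpr hIm0).integrableOn),
          setIntegral_indicator hSp, setIntegral_indicator hSm, ep, em,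
          MeasureTheory.integral_const_mul, MeasureTheory.integral_const_mul, myInt_exp_neg]
        rcases le_or_gt t aE with h2 | h2
        · rw [max_eq_right h2, myInt_exp_Ioo (by linarith)]
          ring
        · rw [max_eq_left h2.le, Set.Ioo_eq_empty (by intro hcon; linarith)]
          simp
      rw [hνA, hval, sE_of_ge hcase.le]
  -- mean zero and integrability
  have hIpid : IntegrableOn (fun x => 2 * Real.exp (-x) * x) (Set.Ioi aE) volume := by
    refine MeasureTheory.IntegrableOn.congr_fun ((myIntOn_id_exp_neg haE.le).const_mul 2) (fun x _ => by ring)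
      measurableSet_Ioi
  have hImid : IntegrableOn (fun x => 2 * Real.exp x * x) (Set.Ioo (-aE) (-Real.log 2))
      volume :=
    ((continuous_const.mul Real.continuous_exp).mul continuous_id).integrableOn_Icc.mono_set
      Set.Ioo_subset_Icc_self
  obtain ⟨hInt_id, hVal_id⟩ := main (fun x => x) hIpid hImid
  have hmean : (∫ x, x ∂ν) = 0 := by
    rw [hVal_id]
    have vp : ∫ x in Set.Ioi aE, 2 * Real.exp (-x) * x
        = 2 * ((aE + 1) * Real.exp (-aE)) := by
      rw [setIntegral_congr_fun measurableSet_Ioi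
        (fun x _ => by ring : Set.EqOn (fun x => 2 * Real.exp (-x) * x)
          (fun x => 2 * (x * Real.exp (-x))) (Set.Ioi aE)),
        MeasureTheory.integral_const_mul, myInt_id_exp_neg haE.le]
    have vm : ∫ x in Set.Ioo (-aE) (-Real.log 2), 2 * Real.exp x * x
        = 2 * ((-Real.log 2 - 1) * Real.exp (-Real.log 2)
            - (-aE - 1) * Real.exp (-aE)) := by
      rw [setIntegral_congr_fun measurableSet_Ioo
        (fun x _ => by ring : Set.EqOn (fun x => 2 * Real.exp x * x)
          (fun x => 2 * (x * Real.exp x)) (Set.Ioo (-aE) (-Real.log 2))),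
        MeasureTheory.integral_const_mul, myInt_id_exp_Ioo hIoo_le]
    rw [vp, vm, hexp_aE, hexp_l2]
    nlinarith [hkey']
  -- value of the test integral against ν
  have hEqOnp : Set.EqOn (fun x => 2 * Real.exp (-x) * max (x - c * wE) 0)
      (fun x => 2 * (x * Real.exp (-x)) - (2 * (c * wE)) * Real.exp (-x)) (Set.Ioi aE) := by
    intro x hx
    have hx' : aE < x := hx
    simp only
    rw [max_eq_left (by linarith : (0:ℝ) ≤ x - c * wE)]
    ring
  have hIpf : IntegrableOn (fun x => 2 * Real.exp (-x) * max (x - c * wE) 0)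
      (Set.Ioi aE) volume := by
    refine IntegrableOn.congr_fun ?_ hEqOnp.symm measurableSet_Ioi
    exact ((myIntOn_id_exp_neg haE.le).const_mul 2).sub
      ((myIntOn_exp_neg aE).const_mul (2 * (c * wE)))
  have hImf : IntegrableOn (fun x => 2 * Real.exp x * max (x - c * wE) 0)
      (Set.Ioo (-aE) (-Real.log 2)) volume :=
    ((continuous_const.mul Real.continuous_exp).mul
      ((continuous_id.sub continuous_const).max continuous_const)).integrableOn_Icc.mono_set
      Set.Ioo_subset_Icc_self
  obtain ⟨hInt_f, hVal_f⟩ := main (fun x => max (x - c * wE) 0) hIpf hImf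
  have hRHS : (∫ x, max (x - c * wE) 0 ∂ν) = pE * (aE + 1 - c * wE) := by
    rw [hVal_f]
    have vp : ∫ x in Set.Ioi aE, 2 * Real.exp (-x) * max (x - c * wE) 0
        = pE * (aE + 1 - c * wE) := by
      rw [setIntegral_congr_fun measurableSet_Ioi hEqOnp,
        integral_sub (((myIntOn_id_exp_neg haE.le).const_mul 2))
          (((myIntOn_exp_neg aE).const_mul (2 * (c * wE)))),
        MeasureTheory.integral_const_mul, MeasureTheory.integral_const_mul,
        myInt_id_exp_neg haE.le, myInt_exp_neg, hexp_aE]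
      ring
    have vm : ∫ x in Set.Ioo (-aE) (-Real.log 2), 2 * Real.exp x * max (x - c * wE) 0
        = 0 := by
      rw [setIntegral_congr_fun measurableSet_Ioo
        (fun x hx => by
          show 2 * Real.exp x * max (x - c * wE) 0 = 0
          rw [max_eq_right (by linarith [hx.2] : x - c * wE ≤ 0), mul_zero] :
          Set.EqOn (fun x => 2 * Real.exp x * max (x - c * wE) 0)
            (fun _ => 0) (Set.Ioo (-aE) (-Real.log 2)))]
      exact integral_zero _ _
    rw [vp, vm, add_zero]
  -- value of the Laplace integral
  have hLHS : (∫ x, max (c * x - c * wE) 0 ∂laplaceMeasure) = c * pE := by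
    have hld : Measurable fun x : ℝ => Real.toNNReal ((1/2) * Real.exp (-|x|)) :=
      (continuous_const.mul
        (Real.continuous_exp.comp continuous_abs.neg)).measurable.real_toNNReal
    have hrfl : laplaceMeasure
        = volume.withDensity fun x => ((Real.toNNReal ((1/2) * Real.exp (-|x|)) : ℝ≥0) : ℝ≥0∞) :=
      rfl
    rw [hrfl, integral_withDensity_eq_integral_smul hld]
    have e : ∀ x : ℝ, (Real.toNNReal ((1/2) * Real.exp (-|x|)) : ℝ≥0) • max (c * x - c * wE) 0
        = (Set.Ioi wE).indicator
            (fun y => (c/2) * (y * Real.exp (-y)) - ((c * wE)/2) * Real.exp (-y)) x := by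
      intro x
      rw [NNReal.smul_def, Real.coe_toNNReal _ (by positivity), smul_eq_mul]
      rcases le_or_gt x wE with hx | hx
      · rw [Set.indicator_of_notMem (by simpa using hx)]
        rw [max_eq_right (by nlinarith : c * x - c * wE ≤ 0), mul_zero]
      · rw [Set.indicator_of_mem (show x ∈ Set.Ioi wE from hx)]
        have h0 : 0 < x := lt_trans hwE_pos hx
        rw [abs_of_pos h0, max_eq_left (by nlinarith : (0:ℝ) ≤ c * x - c * wE)]
        ring
    simp only [e]
    rw [integral_indicator measurableSet_Ioi,
      integral_sub ((myIntOn_id_exp_neg hwE_pos.le).const_mul (c/2))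
        ((myIntOn_exp_neg wE).const_mul ((c * wE)/2)),
      MeasureTheory.integral_const_mul, MeasureTheory.integral_const_mul,
      myInt_id_exp_neg hwE_pos.le, myInt_exp_neg, hexp_wE]
    ring
  refine ⟨ν, hprob, hInt_id, hmean, htail, ?_⟩
  rw [hLHS, hRHS]
  nlinarith [mul_pos hpE_pos (show (0:ℝ) < 1 + aE - c * (1 + wE) by linarith)]
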